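/- Let A : [0,∞) → ℝ^{n×n} be differentiable with ‖A(t)‖ ≤ M for all t ≥ 0 and ‖A'(t)‖ ≤ c·e^{−λt} for all t ≥ 0, for some constants M, c, λ > 0. Let v : [0,∞) → ℝ^n be differentiable with ‖v(t)‖ ≤ M for all t ≥ 0 and v'(t) = A(t)v(t) + w(t), where ‖w(t)‖ ≤ c·e^{−λt} for all t ≥ 0. Then for every natural number k ≥ 0 there exists c' > 0 such that ‖(d/dt)(A(t)^k v(t)) − A(t)^{k+1} v(t)‖ ≤ c'·e^{−λt} for all t ≥ 0. -/

import Mathlib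

open scoped Matrix.Norms.L2Operator

/-- If `A(t)` is differentiable and bounded with exponentially decaying derivative, and
`v' = A v + w` with `v` bounded and `w` exponentially decaying, then for every `k` the
derivative of `A(t)^k v(t)` differs from `A(t)^{k+1} v(t)` by an exponentially decaying
error. -/
theorem stmt_3 {n : ℕ} (A : ℝ → Matrix (Fin n) (Fin n) ℝ)
    (A' : ℝ → Matrix (Fin n) (Fin n) ℝ) (hA : ∀ t, HasDerivAt A (A' t) t)
    (v : ℝ → EuclideanSpace ℝ (Fin n)) (w : ℝ → EuclideanSpace ℝ (Fin n))
    (hv : ∀ t, HasDerivAt v (Matrix.toEuclideanCLM (𝕜 := ℝ) (A t) (v t) + w t) t)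
    (M c lam : ℝ) (hM : 0 < M) (hc : 0 < c) (hlam : 0 < lam)
    (hAbd : ∀ t ≥ (0 : ℝ), ‖A t‖ ≤ M) (hvbd : ∀ t ≥ (0 : ℝ), ‖v t‖ ≤ M)
    (hA' : ∀ t ≥ (0 : ℝ), ‖A' t‖ ≤ c * Real.exp (-lam * t))
    (hw : ∀ t ≥ (0 : ℝ), ‖w t‖ ≤ c * Real.exp (-lam * t)) (k : ℕ) :
    ∃ c' > 0, ∀ t ≥ (0 : ℝ),
      ‖deriv (fun τ => Matrix.toEuclideanCLM (𝕜 := ℝ) (A τ ^ k) (v τ)) t -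
          Matrix.toEuclideanCLM (𝕜 := ℝ) (A t ^ (k + 1)) (v t)‖ ≤ c' * Real.exp (-lam * t) := by
  -- the linear map sending a matrix to its CLM, as a continuous linear map
  set φ : Matrix (Fin n) (Fin n) ℝ →L[ℝ]
      (EuclideanSpace ℝ (Fin n) →L[ℝ] EuclideanSpace ℝ (Fin n)) :=
    LinearMap.toContinuousLinearMap
      { toFun := fun B => Matrix.toEuclideanCLM (𝕜 := ℝ) B,
        map_add' := fun x y => map_add _ x y,
        map_smul' := fun r x => map_smul _ r x } with hφ
  have hφ_apply : ∀ B, φ B = Matrix.toEuclideanCLM (𝕜 := ℝ) B := fun _ => rfl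
  suffices h : ∃ d : ℝ → EuclideanSpace ℝ (Fin n),
      (∀ t, HasDerivAt (fun τ => Matrix.toEuclideanCLM (𝕜 := ℝ) (A τ ^ k) (v τ)) (d t) t) ∧
      ∃ c' > 0, ∀ t ≥ (0 : ℝ),
        ‖d t - Matrix.toEuclideanCLM (𝕜 := ℝ) (A t ^ (k + 1)) (v t)‖
          ≤ c' * Real.exp (-lam * t) by
    obtain ⟨d, hd, c', hc', hb⟩ := h
    refine ⟨c', hc', fun t ht => ?_⟩
    rw [(hd t).deriv]
    exact hb t ht
  induction k with
  | zero =>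
    refine ⟨fun t => Matrix.toEuclideanCLM (𝕜 := ℝ) (A t) (v t) + w t, fun t => ?_,
      c, hc, fun t ht => ?_⟩
    · have := hv t
      simpa using this
    · simpa using hw t ht
  | succ k ih =>
    obtain ⟨d, hd, c', hc', hb⟩ := ih
    -- derivative of the CLM-valued function
    have hB : ∀ t, HasDerivAt (fun τ => Matrix.toEuclideanCLM (𝕜 := ℝ) (A τ))
        (Matrix.toEuclideanCLM (𝕜 := ℝ) (A' t)) t := fun t => by
      have := φ.hasFDerivAt.comp_hasDerivAt t (hA t)
      exact this
    refine ⟨fun t => Matrix.toEuclideanCLM (𝕜 := ℝ) (A' t)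
        (Matrix.toEuclideanCLM (𝕜 := ℝ) (A t ^ k) (v t))
        + Matrix.toEuclideanCLM (𝕜 := ℝ) (A t) (d t), fun t => ?_, ?_⟩
    · have h1 := (hB t).clm_apply (hd t)
      have heq : (fun τ => Matrix.toEuclideanCLM (𝕜 := ℝ) (A τ ^ (k + 1)) (v τ)) =
          fun τ => Matrix.toEuclideanCLM (𝕜 := ℝ) (A τ)
            (Matrix.toEuclideanCLM (𝕜 := ℝ) (A τ ^ k) (v τ)) := by
        funext τ
        rw [pow_succ', map_mul]
        rfl
      rw [heq]
      exact h1
    · refine ⟨c * M ^ (k + 1) + M * c', by positivity, fun t ht => ?_⟩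
      have hnorm_apply : ∀ (B : Matrix (Fin n) (Fin n) ℝ) (x : EuclideanSpace ℝ (Fin n)),
          ‖Matrix.toEuclideanCLM (𝕜 := ℝ) B x‖ ≤ ‖B‖ * ‖x‖ := by
        intro B x
        calc ‖Matrix.toEuclideanCLM (𝕜 := ℝ) B x‖
            ≤ ‖Matrix.toEuclideanCLM (𝕜 := ℝ) B‖ * ‖x‖ := (Matrix.toEuclideanCLM (𝕜 := ℝ) B).le_opNorm x
          _ = ‖B‖ * ‖x‖ := by rw [← Matrix.cstar_norm_def]
      have hAk : ∀ j, ‖A t ^ j‖ ≤ M ^ j := by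
        intro j
        induction j with
        | zero =>
          simp only [pow_zero]
          rw [Matrix.cstar_norm_def, map_one]
          exact ContinuousLinearMap.norm_id_le
        | succ j ihj =>
          calc ‖A t ^ (j + 1)‖ = ‖A t ^ j * A t‖ := by rw [pow_succ]
            _ ≤ ‖A t ^ j‖ * ‖A t‖ := norm_mul_le _ _
            _ ≤ M ^ j * M := mul_le_mul ihj (hAbd t ht)
                (norm_nonneg _) (by positivity)
            _ = M ^ (j + 1) := by ring
      have hsplit : Matrix.toEuclideanCLM (𝕜 := ℝ) (A t ^ (k + 1 + 1)) (v t) =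
          Matrix.toEuclideanCLM (𝕜 := ℝ) (A t)
            (Matrix.toEuclideanCLM (𝕜 := ℝ) (A t ^ (k + 1)) (v t)) := by
        rw [pow_succ', map_mul]; rfl
      rw [hsplit]
      have key : Matrix.toEuclideanCLM (𝕜 := ℝ) (A' t)
            (Matrix.toEuclideanCLM (𝕜 := ℝ) (A t ^ k) (v t))
          + Matrix.toEuclideanCLM (𝕜 := ℝ) (A t) (d t)
          - Matrix.toEuclideanCLM (𝕜 := ℝ) (A t)
            (Matrix.toEuclideanCLM (𝕜 := ℝ) (A t ^ (k + 1)) (v t))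
          = Matrix.toEuclideanCLM (𝕜 := ℝ) (A' t)
              (Matrix.toEuclideanCLM (𝕜 := ℝ) (A t ^ k) (v t))
            + Matrix.toEuclideanCLM (𝕜 := ℝ) (A t)
              (d t - Matrix.toEuclideanCLM (𝕜 := ℝ) (A t ^ (k + 1)) (v t)) := by
        rw [map_sub]; abel
      rw [key]
      have h1 : ‖Matrix.toEuclideanCLM (𝕜 := ℝ) (A' t)
            (Matrix.toEuclideanCLM (𝕜 := ℝ) (A t ^ k) (v t))‖
          ≤ (c * Real.exp (-lam * t)) * (M ^ k * M) := by
        calc ‖Matrix.toEuclideanCLM (𝕜 := ℝ) (A' t)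
              (Matrix.toEuclideanCLM (𝕜 := ℝ) (A t ^ k) (v t))‖
            ≤ ‖A' t‖ * ‖Matrix.toEuclideanCLM (𝕜 := ℝ) (A t ^ k) (v t)‖ := hnorm_apply _ _
          _ ≤ (c * Real.exp (-lam * t)) * (M ^ k * M) := by
              refine mul_le_mul (hA' t ht) ?_ (norm_nonneg _) (by positivity)
              calc ‖Matrix.toEuclideanCLM (𝕜 := ℝ) (A t ^ k) (v t)‖
                  ≤ ‖A t ^ k‖ * ‖v t‖ := hnorm_apply _ _
                _ ≤ M ^ k * M := mul_le_mul (hAk k) (hvbd t ht) (norm_nonneg _) (by positivity)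
      have h2 : ‖Matrix.toEuclideanCLM (𝕜 := ℝ) (A t)
            (d t - Matrix.toEuclideanCLM (𝕜 := ℝ) (A t ^ (k + 1)) (v t))‖
          ≤ M * (c' * Real.exp (-lam * t)) := by
        calc ‖Matrix.toEuclideanCLM (𝕜 := ℝ) (A t)
              (d t - Matrix.toEuclideanCLM (𝕜 := ℝ) (A t ^ (k + 1)) (v t))‖
            ≤ ‖A t‖ * ‖d t - Matrix.toEuclideanCLM (𝕜 := ℝ) (A t ^ (k + 1)) (v t)‖ :=
              hnorm_apply _ _
          _ ≤ M * (c' * Real.exp (-lam * t)) :=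
              mul_le_mul (hAbd t ht) (hb t ht) (norm_nonneg _) hM.le
      calc ‖Matrix.toEuclideanCLM (𝕜 := ℝ) (A' t)
            (Matrix.toEuclideanCLM (𝕜 := ℝ) (A t ^ k) (v t))
          + Matrix.toEuclideanCLM (𝕜 := ℝ) (A t)
            (d t - Matrix.toEuclideanCLM (𝕜 := ℝ) (A t ^ (k + 1)) (v t))‖
          ≤ (c * Real.exp (-lam * t)) * (M ^ k * M) + M * (c' * Real.exp (-lam * t)) :=
            le_trans (norm_add_le _ _) (add_le_add h1 h2)
        _ = (c * M ^ (k + 1) + M * c') * Real.exp (-lam * t) := by ring
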